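/- Let ℓ ∈ (0,1). For every sequence (μ_n)_{n≥1} of positive reals with Σ_{n=1}^∞ μ_n = 1, one has Σ_{n=1}^∞ ℓ^n/μ_n ≥ ℓ/(1 − √ℓ)². Moreover, the geometric sequence μ_n = (1 − √ℓ)·(√ℓ)^{n−1} satisfies Σ_{n=1}^∞ μ_n = 1 and achieves equality: Σ_{n=1}^∞ ℓ^n/μ_n = ℓ/(1 − √ℓ)². Hence the Tail Approximation Program min { Σ ℓ^n/μ_n : μ_n > 0, Σ μ_n = 1 } is solved by μ_n = (1 − √ℓ) ℓ^{(n−1)/2}. -/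

import Mathlib

theorem stmt_15 (l : ℝ) (hl0 : 0 < l) (hl1 : l < 1) :
    (∀ ms : ℕ → ℝ, (∀ n, 0 < ms n) → HasSum ms 1 →
      ENNReal.ofReal (l / (1 - Real.sqrt l) ^ 2) ≤
        ∑' n : ℕ, ENNReal.ofReal (l ^ (n + 1) / ms n)) ∧
    HasSum (fun n : ℕ => (1 - Real.sqrt l) * Real.sqrt l ^ n) 1 ∧
    ∑' n : ℕ, l ^ (n + 1) / ((1 - Real.sqrt l) * Real.sqrt l ^ n) =
      l / (1 - Real.sqrt l) ^ 2 := by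
  set s := Real.sqrt l with hs
  have hs0 : 0 < s := Real.sqrt_pos.mpr hl0
  have hs1 : s < 1 := by
    have : s < Real.sqrt 1 := Real.sqrt_lt_sqrt hl0.le hl1
    simpa using this
  have hsl : s ^ 2 = l := Real.sq_sqrt hl0.le
  have h1s : 0 < 1 - s := by linarith
  set a : ℝ := s / (1 - s) with ha
  have ha0 : 0 < a := div_pos hs0 h1s
  have hconst : l / (1 - s) ^ 2 = a ^ 2 := by
    rw [ha, div_pow, hsl]
  refine ⟨?_, ?_, ?_⟩
  · intro ms hms hsum
    have key : ∀ n, ENNReal.ofReal (2 * a * s ^ (n + 1)) ≤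
        ENNReal.ofReal (l ^ (n + 1) / ms n) + ENNReal.ofReal (a ^ 2 * ms n) := by
      intro n
      have hm := hms n
      rw [← ENNReal.ofReal_add (by positivity) (by positivity)]
      apply ENNReal.ofReal_le_ofReal
      have hl' : l ^ (n + 1) = (s ^ (n + 1)) ^ 2 := by rw [← hsl]; ring
      rw [hl', div_add' _ _ _ hm.ne', le_div_iff₀ hm]
      nlinarith [sq_nonneg (s ^ (n + 1) - a * ms n)]
    have geo : HasSum (fun n : ℕ => s ^ (n + 1)) a := by
      have h := (hasSum_geometric_of_lt_one hs0.le hs1).mul_left s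
      have : a = s * (1 - s)⁻¹ := by rw [ha, div_eq_mul_inv]
      rw [this]
      convert h using 2 with n
      · rfl
      ring
    have sum1 : ∑' n, ENNReal.ofReal (2 * a * s ^ (n + 1)) = ENNReal.ofReal (2 * a * a) := by
      rw [← ENNReal.ofReal_tsum_of_nonneg (fun n => by positivity)
        ((geo.mul_left (2 * a)).summable), (geo.mul_left (2 * a)).tsum_eq]
    have sum2 : ∑' n, ENNReal.ofReal (a ^ 2 * ms n) = ENNReal.ofReal (a ^ 2) := by
      rw [← ENNReal.ofReal_tsum_of_nonneg (fun n => mul_nonneg (by positivity) (hms n).le)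
        ((hsum.mul_left (a ^ 2)).summable), (hsum.mul_left (a ^ 2)).tsum_eq, mul_one]
    have hle := ENNReal.tsum_le_tsum key
    rw [ENNReal.tsum_add, sum1, sum2] at hle
    have h2 : ENNReal.ofReal (2 * a * a) = ENNReal.ofReal (a ^ 2) + ENNReal.ofReal (a ^ 2) := by
      rw [← ENNReal.ofReal_add (by positivity) (by positivity)]
      ring_nf
    rw [h2] at hle
    rw [hconst]
    exact (ENNReal.add_le_add_iff_right ENNReal.ofReal_ne_top).mp hle
  · have h := (hasSum_geometric_of_lt_one hs0.le hs1).mul_left (1 - s)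
    simpa [mul_inv_cancel₀ h1s.ne'] using h
  · have heq : ∀ n : ℕ, l ^ (n + 1) / ((1 - s) * s ^ n) = (l / (1 - s)) * s ^ n := by
      intro n
      have hln : l ^ (n + 1) = l * s ^ n * s ^ n := by rw [← hsl]; ring
      rw [hln]
      field_simp
    rw [tsum_congr heq, tsum_mul_left, tsum_geometric_of_lt_one hs0.le hs1]
    rw [sq, ← div_div, div_eq_mul_inv]
    ring
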